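/- For every finite group G there exists a topological space X with exactly 4·|G| points whose group of self-homeomorphisms is isomorphic to G. -/

import Mathlib

/-- The group of self-homeomorphisms of a topological space, under composition. -/
instance homeomorphGroup (X : Type*) [TopologicalSpace X] : Group (X ≃ₜ X) where
  mul f g := g.trans f
  one := Homeomorph.refl X
  inv := Homeomorph.symm
  mul_assoc _ _ _ := Homeomorph.ext fun _ => rfl
  one_mul _ := Homeomorph.ext fun _ => rfl
  mul_one _ := Homeomorph.ext fun _ => rfl
  inv_mul_cancel f := Homeomorph.ext fun x => f.symm_apply_apply x

open Pointwise

namespace BMProof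

variable {H : Type} [Group H]

/-- Subgroup generated by `a 1, …, a i`. -/
def Gs (a : ℕ → H) (i : ℕ) : Subgroup H :=
  Subgroup.closure {x | ∃ j, 1 ≤ j ∧ j ≤ i ∧ a j = x}

lemma Gs_mono (a : ℕ → H) {i i' : ℕ} (h : i ≤ i') : Gs a i ≤ Gs a i' := by
  apply Subgroup.closure_mono
  rintro x ⟨j, h1, h2, rfl⟩
  exact ⟨j, h1, h2.trans h, rfl⟩

lemma Gs_zero (a : ℕ → H) : Gs a 0 = ⊥ := by
  have : {x | ∃ j, 1 ≤ j ∧ j ≤ 0 ∧ a j = x} = (∅ : Set H) := by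
    ext x; simp only [Set.mem_setOf_eq, Set.mem_empty_iff_false, iff_false]
    rintro ⟨j, h1, h2, _⟩; omega
  rw [Gs, this, Subgroup.closure_empty]

/-- A chain of generators of a group. -/
structure Chain (H : Type) [Group H] where
  r : ℕ
  a : ℕ → H
  a0 : a 0 = 1
  notmem : ∀ i, 1 ≤ i → i ≤ r → a i ∉ Gs a (i - 1)
  gen : Gs a r = ⊤

variable (c : Chain H)

lemma a_mem_Gs {l k : ℕ} (h : l ≤ k) : c.a l ∈ Gs c.a k := by
  rcases Nat.eq_zero_or_pos l with rfl | hl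
  · rw [c.a0]; exact one_mem _
  · exact Subgroup.subset_closure ⟨l, hl, h, rfl⟩

lemma a_inj {j m : ℕ} (hjm : j < m) (hmr : m ≤ c.r) : c.a j ≠ c.a m := by
  intro h
  apply c.notmem m (by omega) hmr
  rw [← h]
  exact a_mem_Gs c (by omega)

/-- The "staircase" set `T = {a 0 = 1, a 1, …, a r}`. -/
def Tset : Set H := {x | ∃ j, j ≤ c.r ∧ c.a j = x}

/-- Successive quotients. -/
def hh (i : ℕ) : H := (c.a (i - 1))⁻¹ * c.a i

/-- The set of successive quotients. -/
def Eset : Set H := {x | ∃ m, 1 ≤ m ∧ m ≤ c.r ∧ hh c m = x}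

/-- `Eset` together with `1`. -/
def E'set : Set H := insert 1 (Eset c)

lemma one_mem_Tset : (1 : H) ∈ Tset c := ⟨0, Nat.zero_le _, c.a0⟩

lemma one_mem_E'set : (1 : H) ∈ E'set c := Set.mem_insert _ _

lemma one_notmem_Eset : (1 : H) ∉ Eset c := by
  rintro ⟨m, h1, h2, hm⟩
  have hm' : (c.a (m-1))⁻¹ * c.a m = 1 := hm
  exact a_inj c (show m - 1 < m by omega) h2 (inv_mul_eq_one.mp hm')

lemma Eset_eq : Eset c = E'set c \ {1} := by
  ext x
  simp only [E'set, Set.mem_diff, Set.mem_insert_iff, Set.mem_singleton_iff]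
  constructor
  · intro hx
    refine ⟨Or.inr hx, ?_⟩
    rintro rfl; exact one_notmem_Eset c hx
  · rintro ⟨h | h, hne⟩
    · exact absurd h hne
    · exact h

/-! ### The preserved-set machinery -/

/-- `σ` preserves the difference relation given by `S`. -/
def Pres (σ : H → H) (S : Set H) : Prop :=
  ∀ g h : H, g⁻¹ * h ∈ S ↔ (σ g)⁻¹ * σ h ∈ S

variable (σ : H ≃ H)

lemma pres_one : Pres σ ({1} : Set H) := by
  intro g h
  simp only [Set.mem_singleton_iff, inv_mul_eq_one]
  exact ⟨fun h' => by rw [h'], fun h' => σ.injective h'⟩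

lemma pres_diff {S K : Set H} (hS : Pres (⇑σ) S) (hK : Pres (⇑σ) K) : Pres (⇑σ) (S \ K) := by
  intro g h
  simp only [Set.mem_diff, hS g h, hK g h]

lemma pres_inter {S K : Set H} (hS : Pres (⇑σ) S) (hK : Pres (⇑σ) K) : Pres (⇑σ) (S ∩ K) := by
  intro g h
  simp only [Set.mem_inter_iff, hS g h, hK g h]

lemma mem_mul_iff (S K : Set H) (g h : H) :
    g⁻¹ * h ∈ S * K ↔ ∃ z : H, g⁻¹ * z ∈ S ∧ z⁻¹ * h ∈ K := by
  constructor
  · intro hx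
    rw [Set.mem_mul] at hx
    obtain ⟨s, hs, t, ht, hst⟩ := hx
    refine ⟨g * s, by simpa using hs, ?_⟩
    have hre : (g * s)⁻¹ * h = t := by
      rw [mul_inv_rev, mul_assoc, ← hst]
      simp
    rw [hre]; exact ht
  · rintro ⟨z, hz1, hz2⟩
    exact Set.mem_mul.mpr ⟨g⁻¹ * z, hz1, z⁻¹ * h, hz2, by group⟩

lemma pres_mul {S K : Set H} (hS : Pres (⇑σ) S) (hK : Pres (⇑σ) K) : Pres (⇑σ) (S * K) := by
  intro g h
  rw [mem_mul_iff, mem_mul_iff]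
  constructor
  · rintro ⟨z, hz1, hz2⟩
    exact ⟨σ z, (hS g z).1 hz1, (hK z h).1 hz2⟩
  · rintro ⟨w, hw1, hw2⟩
    refine ⟨σ.symm w, ?_, ?_⟩
    · have := (hS g (σ.symm w)).2
      simp only [Equiv.apply_symm_apply] at this
      exact this hw1
    · have := (hK (σ.symm w) h).2
      simp only [Equiv.apply_symm_apply] at this
      exact this hw2

lemma pres_singleton_inv {x : H} (hx : Pres (⇑σ) ({x} : Set H)) :
    Pres (⇑σ) ({x⁻¹} : Set H) := by
  intro g h
  have key : ∀ u v : H, u⁻¹ * v = x⁻¹ ↔ v⁻¹ * u = x := by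
    intro u v
    constructor
    · intro h'
      have : (u⁻¹ * v)⁻¹ = (x⁻¹)⁻¹ := by rw [h']
      simpa [mul_inv_rev] using this
    · intro h'
      have : (v⁻¹ * u)⁻¹ = x⁻¹ := by rw [h']
      simpa [mul_inv_rev] using this
  simp only [Set.mem_singleton_iff, key]
  exact hx h g

/-- The subgroup of elements whose singleton is preserved. -/
def presSub : Subgroup H where
  carrier := {x | Pres (⇑σ) ({x} : Set H)}
  one_mem' := pres_one σ
  mul_mem' := by
    intro x y hx hy
    have : Pres (⇑σ) (({x} : Set H) * ({y} : Set H)) := pres_mul σ hx hy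
    rwa [Set.singleton_mul_singleton] at this
  inv_mem' := by
    intro x hx
    exact pres_singleton_inv σ hx

lemma mem_presSub_pair {x : H} (hx : x ∈ presSub σ) (g h : H) :
    g⁻¹ * h = x ↔ (σ g)⁻¹ * σ h = x := by
  have h1 : Pres (⇑σ) ({x} : Set H) := hx
  have := h1 g h
  simpa using this

/-! ### The key induction -/

theorem rigid (hT : Pres (⇑σ) (Tset c)) (hE' : Pres (⇑σ) (E'set c)) (g : H) :
    σ g = σ 1 * g := by
  have hE : Pres (⇑σ) (Eset c) := by
    rw [Eset_eq]
    exact pres_diff σ hE' (pres_one σ)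
  -- main induction : a i ∈ presSub σ for i ≤ r
  have main : ∀ i, i ≤ c.r → c.a i ∈ presSub σ := by
    intro i
    induction i using Nat.strong_induction_on with
    | _ i IH =>
      intro hir
      rcases Nat.eq_zero_or_pos i with rfl | hi
      · rw [c.a0]; exact one_mem _
      -- i ≥ 1
      have hprev : c.a (i - 1) ∈ presSub σ := IH (i - 1) (by omega) (by omega)
      -- the known set K
      set K : Set H := {x | ∃ m, 1 ≤ m ∧ m < i ∧ hh c m = x} with hK_def
      have hhm_mem : ∀ m, 1 ≤ m → m < i → hh c m ∈ presSub σ := by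
        intro m h1 h2
        have h1' : c.a (m - 1) ∈ presSub σ := IH (m - 1) (by omega) (by omega)
        have h2' : c.a m ∈ presSub σ := IH m (by omega) (by omega)
        exact mul_mem (inv_mem h1') h2'
      have hKpres : Pres (⇑σ) K := by
        intro g' h'
        constructor
        · rintro ⟨m, h1, h2, heq⟩
          exact ⟨m, h1, h2,
            ((mem_presSub_pair σ (hhm_mem m h1 h2) g' h').1 heq.symm).symm⟩
        · rintro ⟨m, h1, h2, heq⟩
          exact ⟨m, h1, h2,
            ((mem_presSub_pair σ (hhm_mem m h1 h2) g' h').2 heq.symm).symm⟩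
      -- the extraction set
      have hXpres : Pres (⇑σ) (((({(c.a (i-1))⁻¹} : Set H) * Tset c) ∩ Eset c) \ K) := by
        apply pres_diff σ _ hKpres
        apply pres_inter σ _ hE
        exact pres_mul σ (inv_mem hprev) hT
      -- set equality
      have hXeq : ((({(c.a (i-1))⁻¹} : Set H) * Tset c) ∩ Eset c) \ K = {hh c i} := by
        ext x
        constructor
        · rintro ⟨⟨hmul, hEx⟩, hKx⟩
          obtain ⟨m, hm1, hmr, hmx⟩ := hEx
          rw [Set.mem_mul] at hmul
          obtain ⟨u, hu, v, hv, huv⟩ := hmul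
          obtain ⟨j, hjr, hjv⟩ := hv
          rw [Set.mem_singleton_iff] at hu
          subst hu; subst hjv
          -- x = (a (i-1))⁻¹ * a j  and  x = hh m
          rw [← hmx] at huv
          -- huv : (c.a (i-1))⁻¹ * c.a j = hh c m
          have hmge : i ≤ m := by
            by_contra hlt
            exact hKx ⟨m, hm1, by omega, hmx⟩
          rcases Nat.lt_or_ge m (i + 1) with hmi | hmi
          · -- m = i
            have : m = i := by omega
            subst this
            simp [← hmx]
          · -- m ≥ i + 1 : contradiction
            exfalso
            set u : H := c.a (i-1) * (c.a (m-1))⁻¹ with hu_def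
            have haj : c.a j = u * c.a m := by
              have h5 : u * c.a m = c.a (i-1) * hh c m := by
                rw [hh, hu_def]; group
              rw [h5, ← huv]; group
            have hu_mem : u ∈ Gs c.a (m-1) :=
              mul_mem (a_mem_Gs c (by omega)) (inv_mem (a_mem_Gs c (le_refl _)))
            rcases Nat.lt_or_ge j m with hjm | hjm
            · -- j ≤ m - 1
              apply c.notmem m (by omega) hmr
              have hjmem : c.a j ∈ Gs c.a (m-1) := a_mem_Gs c (by omega)
              have : c.a m = u⁻¹ * c.a j := by
                rw [haj]; group
              rw [this]
              exact mul_mem (inv_mem hu_mem) hjmem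
            · rcases Nat.eq_or_lt_of_le hjm with hjm' | hjm'
              · -- j = m
                subst hjm'
                have h2 : u * c.a m = 1 * c.a m := by
                  rw [← haj, one_mul]
                have h3 : u = 1 := mul_right_cancel h2
                rw [hu_def] at h3
                exact a_inj c (show i - 1 < m - 1 by omega) (by omega)
                  (mul_inv_eq_one.mp h3)
              · -- j ≥ m + 1
                apply c.notmem j (by omega) hjr
                have : c.a j ∈ Gs c.a m := by
                  rw [haj]
                  exact mul_mem (Gs_mono c.a (by omega) hu_mem) (a_mem_Gs c (le_refl _))
                exact Gs_mono c.a (by omega) this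
        · rintro rfl
          refine ⟨⟨?_, ⟨i, hi, hir, rfl⟩⟩, ?_⟩
          · exact Set.mem_mul.mpr
              ⟨(c.a (i-1))⁻¹, rfl, c.a i, ⟨i, hir, rfl⟩, rfl⟩
          · rintro ⟨m, hm1, hmi, heq⟩
            apply c.notmem i (by omega) hir
            have : c.a i = c.a (i-1) * ((c.a (m-1))⁻¹ * c.a m) := by
              rw [show (c.a (m-1))⁻¹ * c.a m = hh c m from rfl, heq]
              rw [show hh c i = (c.a (i-1))⁻¹ * c.a i from rfl]
              group
            rw [this]
            exact mul_mem (a_mem_Gs c (le_refl _))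
              (mul_mem (inv_mem (a_mem_Gs c (by omega))) (a_mem_Gs c (by omega)))
      rw [hXeq] at hXpres
      -- hh i ∈ presSub, hence a i ∈ presSub
      have h_hh : hh c i ∈ presSub σ := hXpres
      have : c.a i = c.a (i-1) * hh c i := by
        rw [show hh c i = (c.a (i-1))⁻¹ * c.a i from rfl]
        group
      rw [this]
      exact mul_mem hprev h_hh
  -- now presSub = ⊤
  have htop : ∀ x : H, x ∈ presSub σ := by
    have hle : Gs c.a c.r ≤ presSub σ := by
      rw [Gs]
      apply (Subgroup.closure_le _).2
      rintro x ⟨j, _, hj2, rfl⟩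
      exact main j hj2
    intro x
    exact hle (by rw [c.gen]; trivial)
  have key := (mem_presSub_pair σ (htop g) 1 g).1 (by group)
  have expand : σ g = σ 1 * ((σ 1)⁻¹ * σ g) := by group
  rw [expand, key]

lemma exists_chain (H : Type) [Group H] [Fintype H] : Nonempty (Chain H) := by
  have aux : ∀ (k : ℕ) (K : Subgroup H), Nat.card H ≤ k + Nat.card ↥K →
      ∃ (r : ℕ) (a : ℕ → H), a 0 = 1 ∧
        (∀ i, 1 ≤ i → i ≤ r → a i ∉ K ⊔ Gs a (i - 1)) ∧ K ⊔ Gs a r = ⊤ := by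
    intro k
    induction k with
    | zero =>
      intro K hK
      have hKtop : K = ⊤ := Subgroup.eq_top_of_le_card K (by omega)
      exact ⟨0, fun _ => 1, rfl, fun i h1 h2 => absurd h2 (by omega),
        by rw [Gs_zero, sup_bot_eq, hKtop]⟩
    | succ k IH =>
      intro K hK
      by_cases htop : K = ⊤
      · exact ⟨0, fun _ => 1, rfl, fun i h1 h2 => absurd h2 (by omega),
          by rw [Gs_zero, sup_bot_eq, htop]⟩
      · obtain ⟨x, hx⟩ : ∃ x, x ∉ K := by
          by_contra h
          push_neg at h
          exact htop ((Subgroup.eq_top_iff' K).mpr h)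
        set K' : Subgroup H := K ⊔ Subgroup.closure {x} with hK'_def
        have hxK' : x ∈ K' := Subgroup.mem_sup_right (Subgroup.subset_closure rfl)
        have hcard : Nat.card ↥K < Nat.card ↥K' := by
          have e1 : Nat.card ↥K = (K : Set H).ncard := by
            rw [← SetLike.coe_sort_coe, Nat.card_coe_set_eq]
          have e2 : Nat.card ↥K' = (K' : Set H).ncard := by
            rw [← SetLike.coe_sort_coe, Nat.card_coe_set_eq]
          rw [e1, e2]
          apply Set.ncard_lt_ncard _ (Set.toFinite _)
          rw [Set.ssubset_def]
          constructor
          · exact fun y hy => Subgroup.mem_sup_left hy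
          · intro hsub
            exact hx (hsub hxK')
        obtain ⟨r', a', ha0', hnot', htop'⟩ := IH K' (by omega)
        set a : ℕ → H := fun i => if i = 0 then 1 else if i = 1 then x else a' (i - 1)
          with ha_def
        have hgs : ∀ i, 1 ≤ i → K ⊔ Gs a i = K' ⊔ Gs a' (i - 1) := by
          intro i hi
          have hset : {y | ∃ j, 1 ≤ j ∧ j ≤ i ∧ a j = y}
              = insert x {y | ∃ j, 1 ≤ j ∧ j ≤ i - 1 ∧ a' j = y} := by
            ext y
            simp only [Set.mem_setOf_eq, Set.mem_insert_iff]
            constructor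
            · rintro ⟨j, hj1, hj2, rfl⟩
              rcases Nat.eq_or_lt_of_le hj1 with hj | hj
              · left
                simp [ha_def, ← hj]
              · right
                exact ⟨j - 1, by omega, by omega, by
                  simp [ha_def, show ¬ (j = 0) by omega, show ¬ (j = 1) by omega]⟩
            · rintro (rfl | ⟨j, hj1, hj2, rfl⟩)
              · exact ⟨1, le_refl _, hi, by simp [ha_def]⟩
              · exact ⟨j + 1, by omega, by omega, by
                  simp [ha_def, show ¬ (j + 1 = 1) by omega, show ¬ (j = 0) by omega]⟩
          rw [Gs, hset, Set.insert_eq, Subgroup.closure_union, hK'_def, ← Gs, sup_assoc]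
        refine ⟨r' + 1, a, rfl, ?_, ?_⟩
        · intro i h1 h2
          rcases Nat.eq_or_lt_of_le h1 with h1' | h1'
          · have : a i = x := by simp [ha_def, ← h1']
            rw [this, show i - 1 = 0 by omega, Gs_zero, sup_bot_eq]
            exact hx
          · have hai : a i = a' (i - 1) := by
              simp [ha_def, show ¬ (i = 0) by omega, show ¬ (i = 1) by omega]
            rw [hai, hgs (i-1) (by omega), show i - 1 - 1 = i - 2 by omega]
            have := hnot' (i - 1) (by omega) (by omega)
            rwa [show i - 1 - 1 = i - 2 by omega] at this
        · rw [hgs (r' + 1) (by omega)]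
          simpa using htop'
  obtain ⟨r, a, h0, hnot, htop⟩ := aux (Nat.card H) ⊥ (Nat.le_add_right _ _)
  rw [bot_sup_eq] at htop
  refine ⟨⟨r, a, h0, fun i h1 h2 hmem => hnot i h1 h2 ?_, htop⟩⟩
  rw [bot_sup_eq]
  exact hmem

/-! ### The poset on `H × Fin 4` and its Alexandrov topology -/

section Poset

variable (T E' : Set H)

/-- The order on `H × Fin 4`. -/
def lle (x y : H × Fin 4) : Prop :=
  x.2.val ≤ y.2.val ∧ (x.1 = y.1 ∨
    (x.1⁻¹ * y.1 ∈ T ∧ x.2.val = 0 ∧ 2 ≤ y.2.val) ∨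
    (x.1⁻¹ * y.1 ∈ E' ∧ x.2.val ≤ 1 ∧ y.2.val = 3))

lemma lle_refl (x : H × Fin 4) : lle T E' x x := ⟨le_refl _, Or.inl rfl⟩

lemma lle_trans {x y z : H × Fin 4} (h1 : lle T E' x y) (h2 : lle T E' y z) :
    lle T E' x z := by
  obtain ⟨hv1, hd1⟩ := h1
  obtain ⟨hv2, hd2⟩ := h2
  refine ⟨hv1.trans hv2, ?_⟩
  rcases hd1 with e1 | ⟨m1, i1, j1⟩ | ⟨m1, i1, j1⟩ <;>
    rcases hd2 with e2 | ⟨m2, i2, j2⟩ | ⟨m2, i2, j2⟩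
  · exact Or.inl (e1.trans e2)
  · exact Or.inr (Or.inl ⟨by rwa [e1], by omega, j2⟩)
  · exact Or.inr (Or.inr ⟨by rwa [e1], by omega, j2⟩)
  · exact Or.inr (Or.inl ⟨by rwa [← e2], i1, by omega⟩)
  · omega
  · omega
  · exact Or.inr (Or.inr ⟨by rwa [← e2], i1, by omega⟩)
  · omega
  · omega

lemma lle_lt_val {x y : H × Fin 4} (hxy : lle T E' x y) (hne : x ≠ y) :
    x.2.val < y.2.val := by
  obtain ⟨hv, hd⟩ := hxy
  rcases hd with e | ⟨_, i1, j1⟩ | ⟨_, i1, j1⟩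
  · rcases Nat.eq_or_lt_of_le hv with h | h
    · exfalso
      apply hne
      have h2 : x.2 = y.2 := Fin.ext h
      exact Prod.ext e h2
    · exact h
  · omega
  · omega

/-- The Alexandrov topology of up-sets for `lle`. -/
def spT : TopologicalSpace (H × Fin 4) where
  IsOpen U := ∀ ⦃x y⦄, lle T E' x y → x ∈ U → y ∈ U
  isOpen_univ := fun _ _ _ _ => trivial
  isOpen_inter := fun S1 S2 h1 h2 x y hxy hx => ⟨h1 hxy hx.1, h2 hxy hx.2⟩
  isOpen_sUnion := by
    intro S hS x y hxy hx
    obtain ⟨U, hU, hxU⟩ := hx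
    exact ⟨U, hU, hS U hU hxy hxU⟩

lemma spT_isOpen {U : Set (H × Fin 4)}
    (h : ∀ ⦃x y⦄, lle T E' x y → x ∈ U → y ∈ U) : @IsOpen _ (spT T E') U := h

lemma spT_isOpen_elim {U : Set (H × Fin 4)} (h : @IsOpen _ (spT T E') U)
    {x y : H × Fin 4} (hxy : lle T E' x y) (hx : x ∈ U) : y ∈ U := h hxy hx

lemma mem_closure_singleton {x y : H × Fin 4} :
    y ∈ @closure _ (spT T E') {x} ↔ lle T E' y x := by
  letI := spT T E'
  constructor
  · intro hy
    by_contra hn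
    have hop : IsOpen {z : H × Fin 4 | ¬ lle T E' z x} := by
      apply spT_isOpen
      intro u v huv hu hv
      exact hu (lle_trans T E' huv hv)
    rw [mem_closure_iff] at hy
    obtain ⟨z, hz1, hz2⟩ := hy _ hop hn
    rw [Set.mem_singleton_iff] at hz2
    subst hz2
    exact hz1 (lle_refl T E' _)
  · intro h
    rw [mem_closure_iff]
    intro O hO hyO
    exact ⟨x, spT_isOpen_elim T E' hO h hyO, rfl⟩

lemma homeo_lle (f : @Homeomorph (H × Fin 4) (H × Fin 4) (spT T E') (spT T E'))
    (x y : H × Fin 4) : lle T E' x y ↔ lle T E' (f x) (f y) := by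
  letI := spT T E'
  have h1 : f ⁻¹' ({f y} : Set (H × Fin 4)) = {y} := by
    ext z
    simp only [Set.mem_preimage, Set.mem_singleton_iff]
    exact ⟨fun h => f.toEquiv.injective h, fun h => by rw [h]⟩
  constructor
  · intro h
    have hx : x ∈ closure {y} := (mem_closure_singleton T E').mpr h
    rw [← h1, ← Homeomorph.preimage_closure] at hx
    exact (mem_closure_singleton T E').mp hx
  · intro h
    have hx : f x ∈ closure {f y} := (mem_closure_singleton T E').mpr h
    have hx2 : x ∈ f ⁻¹' (closure {f y}) := hx
    rw [Homeomorph.preimage_closure, h1] at hx2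
    exact (mem_closure_singleton T E').mp hx2

lemma homeo_level (f : @Homeomorph (H × Fin 4) (H × Fin 4) (spT T E') (spT T E'))
    (p : H × Fin 4) : (f p).2 = p.2 := by
  letI := spT T E'
  haveI : WellFoundedLT (Fin 4) := Finite.to_wellFoundedLT
  have key : ∀ (g : @Homeomorph (H × Fin 4) (H × Fin 4) (spT T E') (spT T E'))
      (q : H × Fin 4), q.2 ≤ (g q).2 := by
    intro g q
    have hL : StrictMono (fun k : Fin 4 => (g (q.1, k)).2) := by
      intro i j hij
      rw [Fin.lt_def]
      apply lle_lt_val T E'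
      · exact (homeo_lle T E' g (q.1, i) (q.1, j)).mp ⟨le_of_lt hij, Or.inl rfl⟩
      · intro hcon
        have := g.toEquiv.injective hcon
        have h2 := congrArg Prod.snd this
        simp only at h2
        exact absurd h2 (ne_of_lt hij)
    have := hL.le_apply (x := q.2)
    simpa using this
  have h1 : p.2 ≤ (f p).2 := key f p
  have h2 : (f p).2 ≤ (f.symm (f p)).2 := key f.symm (f p)
  rw [Homeomorph.symm_apply_apply] at h2
  exact le_antisymm h2 h1

end Poset

/-! ### Characterizations of the order between levels -/

section Chars

variable (T E' : Set H)

lemma lle_char01 (p q : H) :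
    lle T E' (p, (0:Fin 4)) (q, (1:Fin 4)) ↔ p = q := by
  constructor
  · rintro ⟨-, h | ⟨-, -, h⟩ | ⟨-, -, h⟩⟩
    · exact h
    · exact absurd h (show ¬ (2 ≤ ((1:Fin 4)).val) by decide)
    · exact absurd h (show ¬ (((1:Fin 4)).val = 3) by decide)
  · rintro rfl
    exact ⟨(show ((0:Fin 4)).val ≤ ((1:Fin 4)).val by decide), Or.inl rfl⟩

lemma lle_char12 (p q : H) :
    lle T E' (p, (1:Fin 4)) (q, (2:Fin 4)) ↔ p = q := by
  constructor
  · rintro ⟨-, h | ⟨-, h, -⟩ | ⟨-, -, h⟩⟩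
    · exact h
    · exact absurd h (show ¬ (((1:Fin 4)).val = 0) by decide)
    · exact absurd h (show ¬ (((2:Fin 4)).val = 3) by decide)
  · rintro rfl
    exact ⟨(show ((1:Fin 4)).val ≤ ((2:Fin 4)).val by decide), Or.inl rfl⟩

lemma lle_char23 (p q : H) :
    lle T E' (p, (2:Fin 4)) (q, (3:Fin 4)) ↔ p = q := by
  constructor
  · rintro ⟨-, h | ⟨-, h, -⟩ | ⟨-, h, -⟩⟩
    · exact h
    · exact absurd h (show ¬ (((2:Fin 4)).val = 0) by decide)
    · exact absurd h (show ¬ (((2:Fin 4)).val ≤ 1) by decide)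
  · rintro rfl
    exact ⟨(show ((2:Fin 4)).val ≤ ((3:Fin 4)).val by decide), Or.inl rfl⟩

lemma lle_char02 (h1T : (1:H) ∈ T) (p q : H) :
    lle T E' (p, (0:Fin 4)) (q, (2:Fin 4)) ↔ p⁻¹ * q ∈ T := by
  constructor
  · rintro ⟨-, h | ⟨h, -, -⟩ | ⟨-, -, h⟩⟩
    · have h' : p = q := h
      rw [h']; simpa using h1T
    · exact h
    · exact absurd h (show ¬ (((2:Fin 4)).val = 3) by decide)
  · intro h
    exact ⟨(show ((0:Fin 4)).val ≤ ((2:Fin 4)).val by decide),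
      Or.inr (Or.inl ⟨h, (show ((0:Fin 4)).val = 0 by decide),
        (show 2 ≤ ((2:Fin 4)).val by decide)⟩)⟩

lemma lle_char13 (h1E : (1:H) ∈ E') (p q : H) :
    lle T E' (p, (1:Fin 4)) (q, (3:Fin 4)) ↔ p⁻¹ * q ∈ E' := by
  constructor
  · rintro ⟨-, h | ⟨-, h, -⟩ | ⟨h, -, -⟩⟩
    · have h' : p = q := h
      rw [h']; simpa using h1E
    · exact absurd h (show ¬ (((1:Fin 4)).val = 0) by decide)
    · exact h
  · intro h
    exact ⟨(show ((1:Fin 4)).val ≤ ((3:Fin 4)).val by decide),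
      Or.inr (Or.inr ⟨h, (show ((1:Fin 4)).val ≤ 1 by decide),
        (show ((3:Fin 4)).val = 3 by decide)⟩)⟩

end Chars

/-! ### Every self-homeomorphism is a translation -/

theorem homeo_translation (c : Chain H)
    (f : @Homeomorph (H × Fin 4) (H × Fin 4)
      (spT (Tset c) (E'set c)) (spT (Tset c) (E'set c))) :
    ∃ t : H, ∀ x : H × Fin 4, f x = (t * x.1, x.2) := by
  letI := spT (Tset c) (E'set c)
  have hfp : ∀ (g : H) (i : Fin 4), f (g, i) = ((f (g, i)).1, i) := by
    intro g i
    have h2 : (f (g, i)).2 = i := homeo_level (Tset c) (E'set c) f (g, i)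
    conv_lhs => rw [← Prod.mk.eta (p := f (g, i))]
    rw [h2]
  have hfp' : ∀ (g : H) (i : Fin 4), f.symm (g, i) = ((f.symm (g, i)).1, i) := by
    intro g i
    have h2 : (f.symm (g, i)).2 = i := homeo_level (Tset c) (E'set c) f.symm (g, i)
    conv_lhs => rw [← Prod.mk.eta (p := f.symm (g, i))]
    rw [h2]
  set s : H → H := fun g => (f (g, (0:Fin 4))).1 with hs_def
  set s' : H → H := fun g => (f.symm (g, (0:Fin 4))).1 with hs'_def
  have hss' : ∀ g, s' (s g) = g := by
    intro g
    have h1 : f (g, (0:Fin 4)) = (s g, (0:Fin 4)) := hfp g 0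
    have h2 : f.symm (s g, (0:Fin 4)) = (s' (s g), (0:Fin 4)) := hfp' (s g) 0
    have h3 : f.symm (f (g, (0:Fin 4))) = (g, (0:Fin 4)) := f.symm_apply_apply _
    rw [h1, h2] at h3
    exact congrArg Prod.fst h3
  have hs's : ∀ g, s (s' g) = g := by
    intro g
    have h1 : f.symm (g, (0:Fin 4)) = (s' g, (0:Fin 4)) := hfp' g 0
    have h2 : f (s' g, (0:Fin 4)) = (s (s' g), (0:Fin 4)) := hfp (s' g) 0
    have h3 : f (f.symm (g, (0:Fin 4))) = (g, (0:Fin 4)) := f.apply_symm_apply _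
    rw [h1, h2] at h3
    exact congrArg Prod.fst h3
  -- all levels have the same first component
  have hcomp : ∀ (g : H) (i : Fin 4), (f (g, i)).1 = s g := by
    have c01 : ∀ g, (f (g, (1:Fin 4))).1 = s g := by
      intro g
      have hl : lle (Tset c) (E'set c) (g, (0:Fin 4)) (g, (1:Fin 4)) :=
        ⟨(show ((0:Fin 4)).val ≤ ((1:Fin 4)).val by decide), Or.inl rfl⟩
      have h2 := (homeo_lle (Tset c) (E'set c) f _ _).mp hl
      rw [hfp g 0, hfp g 1] at h2
      exact ((lle_char01 (Tset c) (E'set c) _ _).mp h2).symm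
    have c12 : ∀ g, (f (g, (2:Fin 4))).1 = s g := by
      intro g
      have hl : lle (Tset c) (E'set c) (g, (1:Fin 4)) (g, (2:Fin 4)) :=
        ⟨(show ((1:Fin 4)).val ≤ ((2:Fin 4)).val by decide), Or.inl rfl⟩
      have h2 := (homeo_lle (Tset c) (E'set c) f _ _).mp hl
      rw [hfp g 1, hfp g 2] at h2
      rw [← c01 g]
      exact ((lle_char12 (Tset c) (E'set c) _ _).mp h2).symm
    have c23 : ∀ g, (f (g, (3:Fin 4))).1 = s g := by
      intro g
      have hl : lle (Tset c) (E'set c) (g, (2:Fin 4)) (g, (3:Fin 4)) :=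
        ⟨(show ((2:Fin 4)).val ≤ ((3:Fin 4)).val by decide), Or.inl rfl⟩
      have h2 := (homeo_lle (Tset c) (E'set c) f _ _).mp hl
      rw [hfp g 2, hfp g 3] at h2
      rw [← c12 g]
      exact ((lle_char23 (Tset c) (E'set c) _ _).mp h2).symm
    intro g i
    fin_cases i
    · rfl
    · exact c01 g
    · exact c12 g
    · exact c23 g
  set σ : H ≃ H := ⟨s, s', hss', hs's⟩ with hσ_def
  have hPT : Pres (⇑σ) (Tset c) := by
    intro g h
    show g⁻¹ * h ∈ Tset c ↔ (s g)⁻¹ * s h ∈ Tset c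
    rw [← lle_char02 (Tset c) (E'set c) (one_mem_Tset c) g h,
      ← lle_char02 (Tset c) (E'set c) (one_mem_Tset c) (s g) (s h),
      homeo_lle (Tset c) (E'set c) f (g, (0:Fin 4)) (h, (2:Fin 4)),
      hfp g 0, hfp h 2, hcomp g 0, hcomp h 2]
  have hPE : Pres (⇑σ) (E'set c) := by
    intro g h
    show g⁻¹ * h ∈ E'set c ↔ (s g)⁻¹ * s h ∈ E'set c
    rw [← lle_char13 (Tset c) (E'set c) (one_mem_E'set c) g h,
      ← lle_char13 (Tset c) (E'set c) (one_mem_E'set c) (s g) (s h),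
      homeo_lle (Tset c) (E'set c) f (g, (1:Fin 4)) (h, (3:Fin 4)),
      hfp g 1, hfp h 3, hcomp g 1, hcomp h 3]
  have hrigid := rigid c σ hPT hPE
  refine ⟨s 1, fun x => ?_⟩
  have hx : f x = (s x.1, x.2) := by
    conv_lhs => rw [← Prod.mk.eta (p := x)]
    rw [hfp x.1 x.2, hcomp x.1 x.2]
  have h5 : s x.1 = s 1 * x.1 := hrigid x.1
  rw [hx, h5]

/-! ### Translations as homeomorphisms -/

def transEquiv (t : H) : (H × Fin 4) ≃ (H × Fin 4) where
  toFun x := (t * x.1, x.2)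
  invFun x := (t⁻¹ * x.1, x.2)
  left_inv x := by simp
  right_inv x := by simp

lemma lle_mul (T E' : Set H) (t : H) {x y : H × Fin 4} (h : lle T E' x y) :
    lle T E' (t * x.1, x.2) (t * y.1, y.2) := by
  obtain ⟨hv, hd⟩ := h
  refine ⟨hv, ?_⟩
  have key : (t * x.1)⁻¹ * (t * y.1) = x.1⁻¹ * y.1 := by group
  rcases hd with e | ⟨m, h1, h2⟩ | ⟨m, h1, h2⟩
  · exact Or.inl (by rw [e])
  · exact Or.inr (Or.inl ⟨by rw [key]; exact m, h1, h2⟩)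
  · exact Or.inr (Or.inr ⟨by rw [key]; exact m, h1, h2⟩)

def transHomeo (T E' : Set H) (t : H) :
    @Homeomorph (H × Fin 4) (H × Fin 4) (spT T E') (spT T E') :=
  letI := spT T E'
  { toEquiv := transEquiv t
    continuous_toFun := by
      rw [continuous_def]
      intro U hU
      apply spT_isOpen
      intro x y hxy hx
      exact spT_isOpen_elim T E' hU (lle_mul T E' t hxy) hx
    continuous_invFun := by
      rw [continuous_def]
      intro U hU
      apply spT_isOpen
      intro x y hxy hx
      exact spT_isOpen_elim T E' hU (lle_mul T E' t⁻¹ hxy) hx }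

lemma transHomeo_apply (T E' : Set H) (t : H) (x : H × Fin 4) :
    transHomeo T E' t x = (t * x.1, x.2) := rfl

end BMProof

/-- For every finite group `G` there exists a topological space `X` with exactly
`4 * |G|` points whose group of self-homeomorphisms is isomorphic to `G`. -/
theorem exists_topSpace_card_four_mul_homeo_iso (G : Type*) [Group G] [Fintype G] :
    ∃ (X : Type) (_ : TopologicalSpace X) (_ : Fintype X),
      Fintype.card X = 4 * Fintype.card G ∧ Nonempty ((X ≃ₜ X) ≃* G) := by
  classical
  letI : Fintype (Shrink.{0} G) := Fintype.ofEquiv G (equivShrink.{0} G)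
  let eM : Shrink.{0} G ≃* G := Shrink.mulEquiv
  obtain ⟨c⟩ := BMProof.exists_chain (Shrink.{0} G)
  refine ⟨Shrink.{0} G × Fin 4, BMProof.spT (BMProof.Tset c) (BMProof.E'set c),
    inferInstance, ?_, ?_⟩
  · have hG : Fintype.card (Shrink.{0} G) = Fintype.card G :=
      Fintype.card_congr ((equivShrink.{0} G)).symm
    rw [Fintype.card_prod, Fintype.card_fin, hG]
    ring
  · letI := BMProof.spT (BMProof.Tset c) (BMProof.E'set c)
    have hmul : ∀ t u : Shrink.{0} G,
        BMProof.transHomeo (BMProof.Tset c) (BMProof.E'set c) (t * u) =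
          BMProof.transHomeo (BMProof.Tset c) (BMProof.E'set c) t *
            BMProof.transHomeo (BMProof.Tset c) (BMProof.E'set c) u := by
      intro t u
      apply Homeomorph.ext
      intro x
      show ((t * u) * x.1, x.2) = (t * (u * x.1), x.2)
      rw [mul_assoc]
    let Φ : (Shrink.{0} G) →* ((Shrink.{0} G × Fin 4) ≃ₜ (Shrink.{0} G × Fin 4)) :=
      MonoidHom.mk' (fun t => BMProof.transHomeo (BMProof.Tset c) (BMProof.E'set c) t) hmul
    have hinj : Function.Injective Φ := by
      intro t u h
      have h3 : (Φ t) (1, (0:Fin 4)) = (Φ u) (1, (0:Fin 4)) := by rw [h]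
      have h4 : ((t * 1 : Shrink.{0} G), (0:Fin 4)) = (u * 1, (0:Fin 4)) := h3
      have h5 := congrArg Prod.fst h4
      simpa using h5
    have hsurj : Function.Surjective Φ := by
      intro f
      obtain ⟨t, ht⟩ := BMProof.homeo_translation c f
      exact ⟨t, Homeomorph.ext fun x => (ht x).symm⟩
    exact ⟨(MulEquiv.ofBijective Φ ⟨hinj, hsurj⟩).symm.trans eM⟩
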